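/- Let d ≥ 2, let T be the d²×d² diagonal matrix with entries T_{(i,j),(k,l)} = δ_{ik}δ_{jl}δ_{ij}, and set Ω = 1 − T, ρ₀ = (1/(d(d−1))) (1 − T), ρ₁ = (1/d²) 1. Then Ω satisfies 0 ≤ Ω ≤ 1, ρ₀ and ρ₁ are positive semidefinite with unit trace, and Tr(Ω ρ₀) = 1 while Tr(Ω ρ₁) = 1 − 1/d. Hence the test accepting on Ω has type I error probability 1 − Tr(Ω ρ₀) = 0 and type II error probability Tr(Ω ρ₁) = 1 − 1/d. -/

import Mathlib

open Matrix
open scoped ComplexOrder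

/-- The diagonal part `T = Δ(S)` of the swap matrix, with entries
`T_{(i,j),(k,l)} = δ_{ik} δ_{jl} δ_{ij}`. -/
def diagSwapMatrix (d : ℕ) : Matrix (Fin d × Fin d) (Fin d × Fin d) ℂ :=
  Matrix.of fun p q => if p.1 = q.1 ∧ p.2 = q.2 ∧ p.1 = p.2 then 1 else 0

lemma diagSwap_eq (d : ℕ) : diagSwapMatrix d
      = Matrix.diagonal (fun p : Fin d × Fin d => if p.1 = p.2 then (1:ℂ) else 0) := by
  ext p q
  simp only [diagSwapMatrix, Matrix.of_apply, Matrix.diagonal_apply]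
  by_cases h : p = q
  · subst h; simp
  · have : ¬(p.1 = q.1 ∧ p.2 = q.2 ∧ p.1 = p.2) := by
      intro ⟨h1, h2, _⟩; exact h (Prod.ext h1 h2)
    simp [h, this]

lemma sum_f (d : ℕ) : ∑ p : Fin d × Fin d, (if p.1 = p.2 then (1:ℂ) else 0) = d := by
  rw [Fintype.sum_prod_type]
  simp [Finset.sum_ite_eq']

/-- With `Ω = 1 − T`, `ρ₀ = (1/(d(d−1)))(1 − T)` and `ρ₁ = (1/d²) 1`:
`0 ≤ Ω ≤ 1`, `ρ₀, ρ₁` are states, `Tr(Ω ρ₀) = 1` and `Tr(Ω ρ₁) = 1 − 1/d`, so the test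
accepting on `Ω` has type I error `1 − Tr(Ω ρ₀) = 0` and type II error
`Tr(Ω ρ₁) = 1 − 1/d`. -/
theorem asymmetric_discrimination_both_unknown (d : ℕ) (hd : 2 ≤ d)
    (T : Matrix (Fin d × Fin d) (Fin d × Fin d) ℂ) (hT : T = diagSwapMatrix d)
    (Ω ρ₀ ρ₁ : Matrix (Fin d × Fin d) (Fin d × Fin d) ℂ)
    (hΩ : Ω = (1 : Matrix (Fin d × Fin d) (Fin d × Fin d) ℂ) - T)
    (hρ₀ : ρ₀ = (1 / ((d : ℂ) * ((d : ℂ) - 1))) •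
      ((1 : Matrix (Fin d × Fin d) (Fin d × Fin d) ℂ) - T))
    (hρ₁ : ρ₁ = (1 / (d : ℂ) ^ 2) • (1 : Matrix (Fin d × Fin d) (Fin d × Fin d) ℂ)) :
    Ω.PosSemidef ∧ ((1 : Matrix (Fin d × Fin d) (Fin d × Fin d) ℂ) - Ω).PosSemidef ∧
    ρ₀.PosSemidef ∧ ρ₀.trace = 1 ∧
    ρ₁.PosSemidef ∧ ρ₁.trace = 1 ∧
    (Ω * ρ₀).trace = 1 ∧ (Ω * ρ₁).trace = 1 - 1 / (d : ℂ) ∧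
    1 - (Ω * ρ₀).trace = 0 ∧ (Ω * ρ₁).trace = 1 - 1 / (d : ℂ) := by
  set f : Fin d × Fin d → ℂ := fun p => if p.1 = p.2 then (1:ℂ) else 0 with hf
  set g : Fin d × Fin d → ℂ := fun p => if p.1 = p.2 then (0:ℂ) else 1 with hg
  have hd0 : (d : ℂ) ≠ 0 := Nat.cast_ne_zero.mpr (by omega)
  have hd1 : (d : ℂ) - 1 ≠ 0 := by
    intro h
    have : (d : ℂ) = 1 := by linear_combination h
    have : d = 1 := by exact_mod_cast this
    omega
  have hΩd : Ω = Matrix.diagonal g := by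
    rw [hΩ, hT, diagSwap_eq]
    ext p q
    by_cases h : p = q
    · subst h
      by_cases h2 : p.1 = p.2 <;>
        simp [Matrix.sub_apply, Matrix.one_apply, Matrix.diagonal_apply, g, h2]
    · simp [Matrix.sub_apply, Matrix.one_apply, Matrix.diagonal_apply, h]
  have hsumg : ∑ p : Fin d × Fin d, g p = (d:ℂ)^2 - d := by
    have : ∑ p : Fin d × Fin d, g p = ∑ p : Fin d × Fin d, (1 - f p) := by
      apply Finset.sum_congr rfl; intro p _
      by_cases h : p.1 = p.2 <;> simp [f, g, h]
    rw [this, Finset.sum_sub_distrib, sum_f]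
    simp [Finset.card_univ, sq]
  have hgg : ∀ p, g p * g p = g p := by
    intro p; by_cases h : p.1 = p.2 <;> simp [g, h]
  have hgnn : ∀ p, 0 ≤ g p := by
    intro p; by_cases h : p.1 = p.2 <;> simp [g, h]
  have hΩpsd : Ω.PosSemidef := by
    rw [hΩd]; exact Matrix.posSemidef_diagonal_iff.mpr hgnn
  have h1Ω : ((1 : Matrix (Fin d × Fin d) (Fin d × Fin d) ℂ) - Ω).PosSemidef := by
    have : (1 : Matrix (Fin d × Fin d) (Fin d × Fin d) ℂ) - Ω = Matrix.diagonal f := by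
      rw [hΩd]
      ext p q
      by_cases h : p = q
      · subst h
        by_cases h2 : p.1 = p.2 <;>
          simp [Matrix.sub_apply, Matrix.one_apply, Matrix.diagonal_apply, f, g, h2]
      · simp [Matrix.sub_apply, Matrix.one_apply, Matrix.diagonal_apply, h]
    rw [this]
    refine Matrix.posSemidef_diagonal_iff.mpr fun p => ?_
    by_cases h : p.1 = p.2 <;> simp [f, h]
  set c : ℂ := 1 / ((d : ℂ) * ((d : ℂ) - 1)) with hc
  have hcnn : 0 ≤ c := by
    have hdr : (2:ℝ) ≤ (d:ℝ) := by exact_mod_cast hd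
    have : c = ((1 / ((d:ℝ) * ((d:ℝ) - 1)) : ℝ) : ℂ) := by push_cast [hc]; ring
    rw [this]
    refine Complex.zero_le_real.mpr (one_div_nonneg.mpr (by nlinarith))
  have hρ₀d : ρ₀ = Matrix.diagonal (fun p => c * g p) := by
    rw [hρ₀, ← hΩ, hΩd, ← Matrix.diagonal_smul]; rfl
  have hρ₀psd : ρ₀.PosSemidef := by
    rw [hρ₀d]
    exact Matrix.posSemidef_diagonal_iff.mpr fun p => mul_nonneg hcnn (hgnn p)
  have hctr : c * ((d:ℂ)^2 - d) = 1 := by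
    rw [hc]; field_simp
  have hρ₀tr : ρ₀.trace = 1 := by
    rw [hρ₀d, Matrix.trace_diagonal, ← Finset.mul_sum, hsumg, hctr]
  have hρ₁psd : ρ₁.PosSemidef := by
    rw [hρ₁, ← Matrix.diagonal_one, ← Matrix.diagonal_smul]
    refine Matrix.posSemidef_diagonal_iff.mpr fun p => ?_
    simp only [Pi.smul_apply, Pi.one_apply, smul_eq_mul, mul_one]
    have : (1 / (d : ℂ) ^ 2) = ((1/(d:ℝ)^2 : ℝ) : ℂ) := by push_cast; ring
    rw [this]
    exact Complex.zero_le_real.mpr (by positivity)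
  have hρ₁tr : ρ₁.trace = 1 := by
    rw [hρ₁, Matrix.trace_smul, Matrix.trace_one]
    simp [Finset.card_univ, sq]
    field_simp
  have htr0 : (Ω * ρ₀).trace = 1 := by
    rw [hΩd, hρ₀d, Matrix.diagonal_mul_diagonal, Matrix.trace_diagonal]
    have : ∀ p : Fin d × Fin d, g p * (c * g p) = c * g p := by
      intro p; rw [mul_left_comm, hgg]
    simp_rw [this]
    rw [← Finset.mul_sum, hsumg, hctr]
  have htr1 : (Ω * ρ₁).trace = 1 - 1 / (d:ℂ) := by
    rw [hρ₁, Matrix.mul_smul, Matrix.mul_one, Matrix.trace_smul, hΩd,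
      Matrix.trace_diagonal, hsumg]
    rw [smul_eq_mul]; field_simp
  exact ⟨hΩpsd, h1Ω, hρ₀psd, hρ₀tr, hρ₁psd, hρ₁tr, htr0, htr1, by rw [htr0]; ring, htr1⟩
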